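/- Let φ : F₂^(m+k) → F₂^(m-k) (0 < k < m) satisfy (P₁*) and let f(x,y) = x·φ(y) + h(y) on F₂^(m-k) × F₂^(m+k). Then V = F₂^(m-k) × {0} is the unique M-subspace of f of dimension m-k if and only if there is no nonzero b₂ ∈ F₂^(m+k) and (m-k-1)-dimensional subspace U ⊆ F₂^(m-k) such that u·D_{b₂}φ(y) = 0 for all u ∈ U and all y ∈ F₂^(m+k). -/
import Mathlib

open Finset

/-- Dot product on `F₂^k`. -/
def dotp {k : ℕ} (x y : Fin k → ZMod 2) : ZMod 2 := ∑ i, x i * y i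

/-- The character `z ↦ (-1)^z`. -/
def chr (z : ZMod 2) : ℤ := (-1 : ℤ) ^ z.val

/-- Walsh–Hadamard transform of a Boolean function on `F₂^p × F₂^q`. -/
def walshP {p q : ℕ} (f : (Fin p → ZMod 2) × (Fin q → ZMod 2) → ZMod 2)
    (a : Fin p → ZMod 2) (b : Fin q → ZMod 2) : ℤ :=
  ∑ x : Fin p → ZMod 2, ∑ y : Fin q → ZMod 2, chr (f (x, y) + dotp a x + dotp b y)

/-- `S` is a 2-dimensional affine subspace (flat) of `F₂^k`. -/
def Is2Flat {k : ℕ} (S : Set (Fin k → ZMod 2)) : Prop :=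
  ∃ (c : Fin k → ZMod 2) (W : Submodule (ZMod 2) (Fin k → ZMod 2)),
    Module.finrank (ZMod 2) ↥W = 2 ∧ S = (fun w => c + w) '' (W : Set (Fin k → ZMod 2))

/-- `V` is an M-subspace of `f`: all second-order derivatives along `V` vanish. -/
def IsMSub {p q : ℕ} (f : (Fin p → ZMod 2) × (Fin q → ZMod 2) → ZMod 2)
    (V : Submodule (ZMod 2) ((Fin p → ZMod 2) × (Fin q → ZMod 2))) : Prop :=
  ∀ a ∈ V, ∀ b ∈ V, ∀ x, f x + f (x + a) + f (x + b) + f (x + a + b) = 0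

/-- Property `(P₁*)`. -/
def P1star {p q : ℕ} (φ : (Fin p → ZMod 2) → (Fin q → ZMod 2)) : Prop :=
  ∀ v w : Fin p → ZMod 2, LinearIndependent (ZMod 2) ![v, w] →
    ∃ y, φ y + φ (y + v) + φ (y + w) + φ (y + v + w) ≠ 0

section Aux

lemma dotp_add_left' {n : ℕ} (x u v : Fin n → ZMod 2) :
    dotp (x + u) v = dotp x v + dotp u v := by
  simp [dotp, add_mul, Finset.sum_add_distrib]

lemma dotp_add_right' {n : ℕ} (x u v : Fin n → ZMod 2) :
    dotp x (u + v) = dotp x u + dotp x v := by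
  simp [dotp, mul_add, Finset.sum_add_distrib]

lemma dotp_zero_left' {n : ℕ} (v : Fin n → ZMod 2) : dotp 0 v = 0 := by
  simp [dotp]

lemma zmod2_cases (s : ZMod 2) : s = 0 ∨ s = 1 :=
  (by decide : ∀ s : ZMod 2, s = 0 ∨ s = 1) s

lemma zmod2_two : (2 : ZMod 2) = 0 := by decide

lemma dotp_eq_zero_all {n : ℕ} (v : Fin n → ZMod 2) (h : ∀ x, dotp x v = 0) :
    v = 0 := by
  ext i
  have hi := h (Pi.single i 1)
  rw [dotp] at hi
  simp only [Pi.single_apply] at hi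
  rw [Finset.sum_eq_single i] at hi
  · simpa using hi
  · intro j _ hj; simp [hj]
  · simp

lemma vadd_self {n : ℕ} (v : Fin n → ZMod 2) : v + v = 0 := by
  ext i
  exact (by decide : ∀ a : ZMod 2, a + a = 0) _

lemma vadd_add_self {n : ℕ} (w v : Fin n → ZMod 2) : w + v + v = w := by
  rw [add_assoc, vadd_self, add_zero]

lemma pair_li {n : ℕ} {v w : Fin n → ZMod 2} (hv : v ≠ 0) (hw : w ≠ 0)
    (hvw : v ≠ w) : LinearIndependent (ZMod 2) ![v, w] := by
  rw [LinearIndependent.pair_iff]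
  intro s t hst
  rcases zmod2_cases s with rfl | rfl <;> rcases zmod2_cases t with rfl | rfl
  · exact ⟨rfl, rfl⟩
  · exfalso; apply hw; simpa using hst
  · exfalso; apply hv; simpa using hst
  · exfalso
    apply hvw
    simp only [one_smul] at hst
    ext i
    have hi := congrFun hst i
    simp only [Pi.add_apply, Pi.zero_apply] at hi
    exact (by decide : ∀ a b : ZMod 2, a + b = 0 → a = b) _ _ hi

lemma finrank_pi_zmod2 (n : ℕ) :
    Module.finrank (ZMod 2) (Fin n → ZMod 2) = n := by
  rw [Module.finrank_pi]; exact Fintype.card_fin n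

lemma prod_top_bot_eq_range_inl (p q : ℕ) :
    Submodule.prod (⊤ : Submodule (ZMod 2) (Fin p → ZMod 2))
        (⊥ : Submodule (ZMod 2) (Fin q → ZMod 2)) =
      LinearMap.range (LinearMap.inl (ZMod 2) (Fin p → ZMod 2) (Fin q → ZMod 2)) := by
  rw [LinearMap.range_inl]
  ext ⟨a, b⟩
  simp [Submodule.mem_prod]

lemma finrank_prod_top_bot (p q : ℕ) :
    Module.finrank (ZMod 2)
      (Submodule.prod (⊤ : Submodule (ZMod 2) (Fin p → ZMod 2))
        (⊥ : Submodule (ZMod 2) (Fin q → ZMod 2))) = p := by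
  rw [prod_top_bot_eq_range_inl,
    LinearMap.finrank_range_of_inj LinearMap.inl_injective, finrank_pi_zmod2]

end Aux

set_option maxHeartbeats 2000000 in
/-- under `(P₁*)`, `F₂^{m-k} × {0}` is the unique M-subspace of `f` of
dimension `m-k` iff no nonzero `b₂` and `(m-k-1)`-dimensional `U` exist with
`u · D_{b₂}φ(y) = 0` for all `u ∈ U` and all `y`. -/
theorem unique_canonical_MSub_iff {m k : ℕ} (hk : 0 < k) (hkm : k < m)
    (φ : (Fin (m + k) → ZMod 2) → (Fin (m - k) → ZMod 2)) (hφ : P1star φ)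
    (h : (Fin (m + k) → ZMod 2) → ZMod 2)
    (f : (Fin (m - k) → ZMod 2) × (Fin (m + k) → ZMod 2) → ZMod 2)
    (hf : ∀ x y, f (x, y) = dotp x (φ y) + h y) :
    (∀ V : Submodule (ZMod 2) ((Fin (m - k) → ZMod 2) × (Fin (m + k) → ZMod 2)),
        IsMSub f V → Module.finrank (ZMod 2) ↥V = m - k →
        V = Submodule.prod (⊤ : Submodule (ZMod 2) (Fin (m - k) → ZMod 2))
              (⊥ : Submodule (ZMod 2) (Fin (m + k) → ZMod 2))) ↔
      ¬ ∃ b₂ : Fin (m + k) → ZMod 2, b₂ ≠ 0 ∧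
          ∃ U : Submodule (ZMod 2) (Fin (m - k) → ZMod 2),
            Module.finrank (ZMod 2) ↥U = m - k - 1 ∧
            ∀ u ∈ U, ∀ y, dotp u (φ (y + b₂) + φ y) = 0 := by
  haveI : Fact (Nat.Prime 2) := ⟨Nat.prime_two⟩
  have hmk : 0 < m - k := by omega
  constructor
  · -- uniqueness → nonexistence
    rintro huniq ⟨b₂, hb₂, U, hUrk, hUprop⟩
    set inl := LinearMap.inl (ZMod 2) (Fin (m - k) → ZMod 2) (Fin (m + k) → ZMod 2)
      with hinl
    set V : Submodule (ZMod 2) ((Fin (m - k) → ZMod 2) × (Fin (m + k) → ZMod 2)) :=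
      U.map inl ⊔ Submodule.span (ZMod 2) {((0 : Fin (m - k) → ZMod 2), b₂)} with hV
    have hmemV : ∀ v ∈ V, ∃ u ∈ U, ∃ t : ZMod 2, v = (u, t • b₂) := by
      intro v hv
      rw [hV, Submodule.mem_sup] at hv
      obtain ⟨y, hy, z, hz, rfl⟩ := hv
      obtain ⟨u, hu, rfl⟩ := Submodule.mem_map.1 hy
      obtain ⟨t, rfl⟩ := Submodule.mem_span_singleton.1 hz
      refine ⟨u, hu, t, ?_⟩
      simp [hinl, Prod.smul_mk, Prod.ext_iff]
    have hMS : IsMSub f V := by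
      intro a ha b hb x
      obtain ⟨u, hu, s, rfl⟩ := hmemV a ha
      obtain ⟨u', hu', t, rfl⟩ := hmemV b hb
      obtain ⟨x₁, y⟩ := x
      have h1 : dotp u (φ (y + b₂)) + dotp u (φ y) = 0 := by
        rw [← dotp_add_right']; exact hUprop u hu y
      have h2 : dotp u' (φ (y + b₂)) + dotp u' (φ y) = 0 := by
        rw [← dotp_add_right']; exact hUprop u' hu' y
      rcases zmod2_cases s with rfl | rfl <;> rcases zmod2_cases t with rfl | rfl
      · simp only [zero_smul, Prod.mk_add_mk, add_zero, hf, dotp_add_left']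
        linear_combination (dotp x₁ (φ y) * 2 + dotp u (φ y) + dotp u' (φ y)
          + h y * 2) * zmod2_two
      · simp only [zero_smul, one_smul, Prod.mk_add_mk, add_zero, hf, dotp_add_left']
        linear_combination h1 + (dotp x₁ (φ y) + h y + dotp x₁ (φ (y + b₂))
          + dotp u' (φ (y + b₂)) + h (y + b₂)) * zmod2_two
      · simp only [zero_smul, one_smul, Prod.mk_add_mk, add_zero, hf, dotp_add_left']
        linear_combination h2 + (dotp x₁ (φ y) + h y + dotp x₁ (φ (y + b₂))
          + dotp u (φ (y + b₂)) + h (y + b₂)) * zmod2_two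
      · simp only [one_smul, Prod.mk_add_mk, vadd_add_self, hf, dotp_add_left']
        linear_combination h1 + h2 + (dotp x₁ (φ y) + h y + dotp x₁ (φ (y + b₂))
          + h (y + b₂)) * zmod2_two
    have hVrk : Module.finrank (ZMod 2) ↥V = m - k := by
      have hinf : U.map inl ⊓ Submodule.span (ZMod 2)
          {((0 : Fin (m - k) → ZMod 2), b₂)} = ⊥ := by
        rw [eq_bot_iff]
        rintro z ⟨hz1, hz2⟩
        obtain ⟨t, rfl⟩ := Submodule.mem_span_singleton.1 hz2
        obtain ⟨u, _, huz⟩ := Submodule.mem_map.1 hz1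
        rcases zmod2_cases t with rfl | rfl
        · simp
        · exfalso
          apply hb₂
          have := congrArg Prod.snd huz
          simpa [hinl] using this.symm
      have h1 : Module.finrank (ZMod 2) ↥(U.map inl) = m - k - 1 := by
        rw [← hUrk]
        exact (Submodule.equivMapOfInjective inl LinearMap.inl_injective U).symm.finrank_eq
      have h2 : Module.finrank (ZMod 2)
          ↥(Submodule.span (ZMod 2) {((0 : Fin (m - k) → ZMod 2), b₂)}) = 1 := by
        apply finrank_span_singleton
        simp [Prod.ext_iff, hb₂]
      have h3 := Submodule.finrank_sup_add_finrank_inf_eq (U.map inl)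
        (Submodule.span (ZMod 2) {((0 : Fin (m - k) → ZMod 2), b₂)})
      rw [hinf, h1, h2] at h3
      simp only [finrank_bot, add_zero] at h3
      rw [hV]
      omega
    have hcontra := huniq V hMS hVrk
    have hmem : ((0 : Fin (m - k) → ZMod 2), b₂) ∈ V := by
      rw [hV]
      exact Submodule.mem_sup_right (Submodule.mem_span_singleton_self _)
    rw [hcontra] at hmem
    exact hb₂ (Submodule.mem_prod.1 hmem).2
  · -- nonexistence → uniqueness
    intro hne V hMS hVrk
    have hdep : ∀ p ∈ V, ∀ q ∈ V, p.2 = 0 ∨ q.2 = 0 ∨ p.2 = q.2 := by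
      intro p hp q hq
      by_contra hcon
      push_neg at hcon
      obtain ⟨hp2, hq2, hpq⟩ := hcon
      obtain ⟨y, hy⟩ := hφ p.2 q.2 (pair_li hp2 hq2 hpq)
      apply hy
      obtain ⟨p₁, p₂⟩ := p
      obtain ⟨q₁, q₂⟩ := q
      simp only at hp2 hq2 hpq ⊢
      have E : ∀ x : Fin (m - k) → ZMod 2, dotp x (φ y) + h y
          + (dotp x (φ (y + p₂)) + dotp p₁ (φ (y + p₂)) + h (y + p₂))
          + (dotp x (φ (y + q₂)) + dotp q₁ (φ (y + q₂)) + h (y + q₂))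
          + (dotp x (φ (y + p₂ + q₂)) + dotp p₁ (φ (y + p₂ + q₂))
              + dotp q₁ (φ (y + p₂ + q₂)) + h (y + p₂ + q₂)) = 0 := by
        intro x
        have hms := hMS (p₁, p₂) hp (q₁, q₂) hq (x, y)
        simp only [Prod.mk_add_mk, hf, dotp_add_left'] at hms
        linear_combination hms
      apply dotp_eq_zero_all
      intro x
      have Ex := E x
      have E0 := E 0
      simp only [dotp_zero_left', zero_add] at E0
      rw [dotp_add_right', dotp_add_right', dotp_add_right']
      linear_combination Ex + E0 -
        (h y + dotp p₁ (φ (y + p₂)) + h (y + p₂) + dotp q₁ (φ (y + q₂)) + h (y + q₂)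
          + dotp p₁ (φ (y + p₂ + q₂)) + dotp q₁ (φ (y + p₂ + q₂))
          + h (y + p₂ + q₂)) * zmod2_two
    by_cases hall : ∀ p ∈ V, Prod.snd p = (0 : Fin (m + k) → ZMod 2)
    · have hle : V ≤ Submodule.prod (⊤ : Submodule (ZMod 2) (Fin (m - k) → ZMod 2))
          (⊥ : Submodule (ZMod 2) (Fin (m + k) → ZMod 2)) := by
        intro v hv
        exact Submodule.mem_prod.2 ⟨trivial, hall v hv⟩
      apply Submodule.eq_of_le_of_finrank_le hle
      rw [finrank_prod_top_bot, hVrk]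
    · exfalso
      push_neg at hall
      obtain ⟨⟨c, b₂⟩, hv₀, hb₂⟩ := hall
      simp only at hb₂
      apply hne
      refine ⟨b₂, hb₂, V.comap (LinearMap.inl (ZMod 2) _ _), ?_, ?_⟩
      · set g : V →ₗ[ZMod 2] (Fin (m + k) → ZMod 2) :=
          (LinearMap.snd (ZMod 2) _ _) ∘ₗ V.subtype with hg
        have hrange : LinearMap.range g = Submodule.span (ZMod 2) {b₂} := by
          apply le_antisymm
          · rintro z ⟨⟨⟨a, b⟩, hab⟩, rfl⟩
            have hd := hdep (a, b) hab (c, b₂) hv₀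
            simp only at hd
            rcases hd with hb | hb | hb
            · simp [hg, hb]
            · exact absurd hb hb₂
            · simp only [hg, LinearMap.coe_comp, Function.comp_apply,
                Submodule.coe_subtype, LinearMap.snd_apply, hb]
              exact Submodule.mem_span_singleton_self _
          · rw [Submodule.span_le, Set.singleton_subset_iff]
            exact ⟨⟨(c, b₂), hv₀⟩, rfl⟩
        have hrank1 : Module.finrank (ZMod 2) ↥(LinearMap.range g) = 1 := by
          rw [hrange]; exact finrank_span_singleton hb₂
        have hrn := LinearMap.finrank_range_add_finrank_ker g
        rw [hrank1, hVrk] at hrn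
        have hker : LinearMap.ker g = Submodule.comap V.subtype
            (LinearMap.ker (LinearMap.snd (ZMod 2) (Fin (m - k) → ZMod 2)
              (Fin (m + k) → ZMod 2))) := by
          rw [hg, LinearMap.ker_comp]
        have hcomap_eq : Submodule.map V.subtype
            (Submodule.comap V.subtype (LinearMap.ker (LinearMap.snd (ZMod 2)
              (Fin (m - k) → ZMod 2) (Fin (m + k) → ZMod 2))))
            = V ⊓ LinearMap.ker (LinearMap.snd (ZMod 2) (Fin (m - k) → ZMod 2)
                (Fin (m + k) → ZMod 2)) := by
          rw [Submodule.map_comap_eq, Submodule.range_subtype]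
        have e1 : Module.finrank (ZMod 2) ↥(LinearMap.ker g)
            = Module.finrank (ZMod 2)
                ↥(V ⊓ LinearMap.ker (LinearMap.snd (ZMod 2) (Fin (m - k) → ZMod 2)
                    (Fin (m + k) → ZMod 2))) := by
          rw [hker, ← hcomap_eq]
          exact (Submodule.equivMapOfInjective V.subtype
            (Submodule.injective_subtype V) _).finrank_eq
        have e2 : Submodule.map (LinearMap.inl (ZMod 2) (Fin (m - k) → ZMod 2)
              (Fin (m + k) → ZMod 2))
            (V.comap (LinearMap.inl (ZMod 2) (Fin (m - k) → ZMod 2)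
              (Fin (m + k) → ZMod 2)))
            = V ⊓ LinearMap.ker (LinearMap.snd (ZMod 2) (Fin (m - k) → ZMod 2)
                (Fin (m + k) → ZMod 2)) := by
          rw [Submodule.map_comap_eq, LinearMap.range_inl]
          exact inf_comm _ _
        have e3 : Module.finrank (ZMod 2)
              ↥(V.comap (LinearMap.inl (ZMod 2) (Fin (m - k) → ZMod 2)
                (Fin (m + k) → ZMod 2)))
            = Module.finrank (ZMod 2)
                ↥(V ⊓ LinearMap.ker (LinearMap.snd (ZMod 2) (Fin (m - k) → ZMod 2)
                    (Fin (m + k) → ZMod 2))) := by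
          rw [← e2]
          exact (Submodule.equivMapOfInjective (LinearMap.inl (ZMod 2) _ _)
            LinearMap.inl_injective _).finrank_eq
        omega
      · intro u hu y
        have hu' : ((u, 0) : (Fin (m - k) → ZMod 2) × (Fin (m + k) → ZMod 2)) ∈ V := hu
        have E := hMS (u, (0 : Fin (m + k) → ZMod 2)) hu' (c, b₂) hv₀
          ((0 : Fin (m - k) → ZMod 2), y)
        simp only [Prod.mk_add_mk, add_zero, zero_add, hf, dotp_add_left',
          dotp_zero_left'] at E
        rw [dotp_add_right']
        linear_combination E - (h y + dotp c (φ (y + b₂)) + h (y + b₂)) * zmod2_two
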